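/- Let 1 ≤ k ≤ n and let S ⊆ {1,…,n} with |S| = k. Define D_S : F₂ⁿ → ℝ by D_S(x) = (k/n)·2^{−(n−k)} + (1 − k/n)·2^{−n} if x_i = 1 for all i ∈ S, and D_S(x) = (1 − k/n)·2^{−n} otherwise. Then D_S is a probability mass function, and its total variation distance to the uniform distribution U(x) = 2^{−n} equals d_TV(D_S, U) = (k/n)·(1 − 2^{−k}). -/
import Mathlib


/-- The planted bipartite `k`-clique distribution `D_S` on `F₂ⁿ`. -/
noncomputable def bicliqueD (n k : ℕ) (S : Finset (Fin n)) (x : Fin n → ZMod 2) : ℝ :=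
  if ∀ i ∈ S, x i = 1 then
    ((k : ℝ) / n) / 2 ^ (n - k) + (1 - (k : ℝ) / n) / 2 ^ n
  else (1 - (k : ℝ) / n) / 2 ^ n

/-- Functions fixed to `1` on `S` correspond to functions on `Sᶜ`. -/
noncomputable def bicliqueEquiv (n : ℕ) (S : Finset (Fin n)) :
    {x : Fin n → ZMod 2 // ∀ i ∈ S, x i = 1} ≃ ({i : Fin n // i ∈ Sᶜ} → ZMod 2) where
  toFun x := fun i => x.1 i.1
  invFun f := ⟨fun i => if h : i ∈ Sᶜ then f ⟨i, h⟩ else 1, by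
    intro i hi
    simp [Finset.mem_compl, hi]⟩
  left_inv x := by
    ext i
    by_cases h : i ∈ Sᶜ
    · simp [h]
    · simp only [Finset.mem_compl, not_not] at h
      simp [Finset.mem_compl, h, x.2 i h]
  right_inv f := by
    ext i
    simp [i.2]

lemma biclique_card (n : ℕ) (S : Finset (Fin n)) :
    (Finset.univ.filter (fun x : Fin n → ZMod 2 => ∀ i ∈ S, x i = 1)).card
      = 2 ^ (n - S.card) := by
  rw [← Fintype.card_subtype]
  rw [Fintype.card_congr (bicliqueEquiv n S)]
  rw [Fintype.card_fun]
  simp [Finset.card_compl]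

/-- `D_S` is a probability mass function, and its total variation distance to the uniform
distribution on `F₂ⁿ` equals `(k/n)·(1 - 2^{-k})`. -/
theorem bicliqueD_tv_to_uniform (n k : ℕ) (hk : 1 ≤ k) (hkn : k ≤ n)
    (S : Finset (Fin n)) (hS : S.card = k) :
    (∀ x, 0 ≤ bicliqueD n k S x) ∧
    (∑ x : Fin n → ZMod 2, bicliqueD n k S x = 1) ∧
    ((1 / 2) * ∑ x : Fin n → ZMod 2, |bicliqueD n k S x - ((2 : ℝ) ^ n)⁻¹|
      = ((k : ℝ) / n) * (1 - ((2 : ℝ) ^ k)⁻¹)) := by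
  have hn : 1 ≤ n := hk.trans hkn
  have hN : (0:ℝ) < n := by exact_mod_cast hn
  have hKN : (k:ℝ) / n ≤ 1 := (div_le_one hN).mpr (by exact_mod_cast hkn)
  have hKN0 : 0 ≤ (k:ℝ) / n := by positivity
  have h1 : 0 ≤ 1 - (k:ℝ)/n := by linarith
  -- power facts
  have hpowsplit : (2:ℝ) ^ n = 2 ^ (n - k) * 2 ^ k := by
    rw [← pow_add, Nat.sub_add_cancel hkn]
  have hp : (0:ℝ) < 2 ^ (n - k) := by positivity
  have hq : (0:ℝ) < 2 ^ k := by positivity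
  have hpn : (0:ℝ) < 2 ^ n := by positivity
  -- counting
  let P : (Fin n → ZMod 2) → Prop := fun x => ∀ i ∈ S, x i = 1
  have hcard : (Finset.univ.filter P).card = 2 ^ (n - k) := by
    rw [show (Finset.univ.filter P).card = 2 ^ (n - S.card) from biclique_card n S, hS]
  have hcard2 : ((Finset.univ.filter (fun x => ¬ P x)).card : ℝ)
      = 2 ^ n - 2 ^ (n - k) := by
    have := Finset.card_filter_add_card_filter_not (s := Finset.univ) (p := P)
    rw [hcard] at this
    have hF : Fintype.card (Fin n → ZMod 2) = 2 ^ n := by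
      rw [Fintype.card_fun]; simp
    rw [Finset.card_univ, hF] at this
    have := congrArg (fun m : ℕ => (m : ℝ)) this
    push_cast at this
    linarith
  have key : ∀ a b : ℝ, (∑ x : Fin n → ZMod 2, if P x then a else b)
      = 2 ^ (n - k) * a + (2 ^ n - 2 ^ (n - k)) * b := by
    intro a b
    rw [Finset.sum_ite, Finset.sum_const, Finset.sum_const, hcard]
    simp only [nsmul_eq_mul]
    rw [hcard2]
    push_cast
    ring
  refine ⟨?_, ?_, ?_⟩
  · intro x
    unfold bicliqueD
    split_ifs
    · have : 0 ≤ ((k : ℝ) / n) / 2 ^ (n - k) := by positivity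
      have : 0 ≤ (1 - (k : ℝ) / n) / 2 ^ n := div_nonneg h1 hpn.le
      linarith [div_nonneg hKN0 hp.le]
    · exact div_nonneg h1 hpn.le
  · have : ∑ x : Fin n → ZMod 2, bicliqueD n k S x
        = ∑ x : Fin n → ZMod 2, if P x then
            ((k : ℝ) / n) / 2 ^ (n - k) + (1 - (k : ℝ) / n) / 2 ^ n
          else (1 - (k : ℝ) / n) / 2 ^ n := rfl
    rw [this, key, hpowsplit]
    field_simp
    ring
  · have habs : ∀ x, |bicliqueD n k S x - ((2 : ℝ) ^ n)⁻¹|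
        = if P x then ((k : ℝ) / n) / 2 ^ (n - k) - ((k : ℝ) / n) / 2 ^ n
          else ((k : ℝ) / n) / 2 ^ n := by
      intro x
      unfold bicliqueD
      split_ifs with h
      · rw [abs_of_nonneg]
        · rw [inv_eq_one_div]; ring
        · have hle : (1:ℝ) / 2 ^ n ≤ 1 / 2 ^ (n - k) := by
            apply one_div_le_one_div_of_le hp
            exact pow_le_pow_right₀ (by norm_num) (Nat.sub_le n k)
          have : ((k : ℝ) / n) / 2 ^ n ≤ ((k : ℝ) / n) / 2 ^ (n - k) := by
            rw [div_eq_mul_one_div ((k:ℝ)/n) ((2:ℝ)^n),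
              div_eq_mul_one_div ((k:ℝ)/n) ((2:ℝ)^(n-k))]
            exact mul_le_mul_of_nonneg_left hle hKN0
          have hinv : ((2 : ℝ) ^ n)⁻¹ = 1 / 2 ^ n := by rw [inv_eq_one_div]
          rw [hinv]
          have hsub : (1 - (k : ℝ) / n) / 2 ^ n - 1 / 2 ^ n = -(((k:ℝ)/n) / 2 ^ n) := by
            ring
          linarith
      · rw [abs_of_nonpos]
        · rw [inv_eq_one_div]; ring
        · rw [inv_eq_one_div]
          have : 0 ≤ ((k:ℝ)/n) / 2 ^ n := div_nonneg hKN0 hpn.le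
          have hsub : (1 - (k : ℝ) / n) / 2 ^ n - 1 / 2 ^ n = -(((k:ℝ)/n) / 2 ^ n) := by
            ring
          linarith
    rw [Finset.sum_congr rfl (fun x _ => habs x), key, hpowsplit]
    have hq' : ((2:ℝ)^k) ≠ 0 := ne_of_gt hq
    field_simp
    ring
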